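/- In a triangulated category satisfying the Krull–Schmidt property, if a (Postnikov-style) complex A_0 → A_1 → ... → A_n of objects (with consecutive composites zero) is homotopic to zero as a complex, then any convolution of it (the final object B_n of a Postnikov system built from distinguished triangles B_{j-1} → A_j → B_j) is isomorphic to the zero object. -/

import Mathlib

open CategoryTheory CategoryTheory.Limits CategoryTheory.Pretriangulated

variable {D : Type} [Category D] [Preadditive D] [HasZeroObject D] [HasShift D ℤ]
  [∀ n : ℤ, (CategoryTheory.shiftFunctor D n).Additive] [Pretriangulated D]
  [HasFiniteBiproducts D]

/-- `Z` is a (right) convolution of the complex `A_0 → A_1 → ⋯ → A_n`, i.e. the final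
object `B_n` of a Postnikov system: objects `B_0 = A_0, B_1, …, B_n` and morphisms
`g_j : B_{j−1} ⟶ A_j`, `h_j : A_j ⟶ B_j` (with `h_0 = id`) such that each
`B_{j−1} → A_j → B_j` extends to a distinguished triangle and `g_j ∘ h_{j−1} = f_j`. -/
def IsConvolution (n : ℕ) (A : ℕ → D) (f : ∀ j, A j ⟶ A (j + 1)) (Z : D) : Prop :=
  ∃ (B : ℕ → D) (e₀ : A 0 ≅ B 0) (g : ∀ j, B j ⟶ A (j + 1))
    (h : ∀ j, A (j + 1) ⟶ B (j + 1)),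
    (∀ j, ∃ w : B (j + 1) ⟶ (B j)⟦(1 : ℤ)⟧,
      Triangle.mk (g j) (h j) w ∈ distTriang D) ∧
    f 0 = e₀.hom ≫ g 0 ∧
    (∀ j, f (j + 1) = h j ≫ g (j + 1)) ∧
    Nonempty (Z ≅ B n)

/-- In a Krull–Schmidt triangulated category (every object is a finite direct sum of
objects with local endomorphism rings), any convolution of a complex
`A_0 → A_1 → ⋯ → A_n` (with zero tail) which is homotopic to zero is a zero object. -/
theorem convolution_of_nullhomotopic_isZero
    (hKS : ∀ X : D, ∃ (m : ℕ) (Y : Fin m → D),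
      (∀ i, IsLocalRing (End (Y i))) ∧ Nonempty (X ≅ ⨁ Y))
    (n : ℕ) (A : ℕ → D) (f : ∀ j, A j ⟶ A (j + 1))
    (hcpx : ∀ j, f j ≫ f (j + 1) = 0)
    (htail : ∀ j, n ≤ j → IsZero (A (j + 1)))
    (hnull : ∃ s : ∀ j, A (j + 1) ⟶ A j,
      (𝟙 (A 0) = f 0 ≫ s 0) ∧
      ∀ j, 𝟙 (A (j + 1)) = s j ≫ f j + f (j + 1) ≫ s (j + 1)) :
    ∀ Z : D, IsConvolution n A f Z → IsZero Z := by
  rintro Z ⟨B, e₀, g, h, htri, hf0, hfs, ⟨eZ⟩⟩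
  obtain ⟨s, hs0, hsj⟩ := hnull
  -- Key claim: every `g j` is a split mono.
  have key : ∀ j, ∃ ρ : A (j + 1) ⟶ B j, g j ≫ ρ = 𝟙 (B j) := by
    intro j
    induction j with
    | zero =>
      refine ⟨s 0 ≫ e₀.hom, ?_⟩
      have hg0 : g 0 = e₀.inv ≫ f 0 := by rw [hf0, e₀.inv_hom_id_assoc]
      rw [hg0]
      simp only [Category.assoc]
      rw [reassoc_of% hs0.symm]
      exact e₀.inv_hom_id
    | succ j ih =>
      obtain ⟨ρ, hρ⟩ := ih
      obtain ⟨w, hT⟩ := htri j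
      -- the connecting map vanishes, since `g j` is a split mono
      have hw : w = 0 := by
        have h31 := comp_distTriang_mor_zero₃₁ _ hT
        change w ≫ (g j)⟦(1 : ℤ)⟧' = 0 at h31
        have hww : w ≫ (g j)⟦(1 : ℤ)⟧' ≫ ρ⟦(1 : ℤ)⟧' = w := by
          rw [← Functor.map_comp, hρ, CategoryTheory.Functor.map_id, Category.comp_id]
        rw [← hww, reassoc_of% h31, zero_comp]
      -- hence `h j` is a split epi
      obtain ⟨τ, hτ⟩ : ∃ τ : B (j + 1) ⟶ A (j + 1), τ ≫ h j = 𝟙 (B (j + 1)) := by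
        obtain ⟨τ, hτ⟩ := Triangle.coyoneda_exact₃ _ hT (𝟙 (B (j + 1)))
          (by change 𝟙 (B (j + 1)) ≫ w = 0; rw [hw, comp_zero])
        exact ⟨τ, hτ.symm⟩
      have hgh : g j ≫ h j = 0 := comp_distTriang_mor_zero₁₂ _ hT
      have hfh : f j ≫ h j = 0 := by
        cases j with
        | zero => rw [hf0, Category.assoc, hgh, comp_zero]
        | succ i => rw [hfs i, Category.assoc, hgh, comp_zero]
      have hrw : f (j + 1) ≫ s (j + 1) = 𝟙 (A (j + 1)) - s j ≫ f j := by
        rw [hsj j]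
        abel
      refine ⟨s (j + 1) ≫ h j, ?_⟩
      calc g (j + 1) ≫ s (j + 1) ≫ h j
          = (τ ≫ h j) ≫ g (j + 1) ≫ s (j + 1) ≫ h j := by
            rw [hτ, Category.id_comp]
        _ = τ ≫ (f (j + 1) ≫ s (j + 1)) ≫ h j := by
            simp only [Category.assoc]
            rw [hfs j]
            simp only [Category.assoc]
        _ = τ ≫ (𝟙 (A (j + 1)) - s j ≫ f j) ≫ h j := by rw [hrw]
        _ = 𝟙 (B (j + 1)) := by
            simp only [Preadditive.sub_comp, Preadditive.comp_sub, Category.id_comp,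
              Category.assoc, hfh, comp_zero, sub_zero, hτ]
  obtain ⟨ρ, hρ⟩ := key n
  have hgn : g n = 0 := (htail n le_rfl).eq_zero_of_tgt _
  have hid : 𝟙 (B n) = 0 := by rw [← hρ, hgn, zero_comp]
  exact IsZero.of_iso (by rw [IsZero.iff_id_eq_zero]; exact hid) eZ
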